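/- arXiv:1908.10081 — 2 statements merged into one kernel-verified Lean document; each statement's English description precedes it below -/
import Mathlib

section
/- Let (X, {R_i}) be a symmetric association scheme of D classes and fix indices r, s, t, i, j, k. Suppose that [i j k]_{x,y,z} = 0 for all vertices x, y, z with (x,y) ∈ R_r, (x,z) ∈ R_s, (y,z) ∈ R_t. Then [k s t]_{w,x,y} = 0 for all vertices w, x, y with (w,x) ∈ R_i, (w,y) ∈ R_j and (x,y) ∈ R_r. -/
open Matrix BigOperators

/-- A symmetric association scheme of `D` classes on a finite vertex set `X`,
encoded by the function `rel` assigning to each pair of vertices the index of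
the relation containing it. -/
structure AssocScheme (D : ℕ) (X : Type) [Fintype X] where
  rel : X → X → Fin (D + 1)
  rel_symm : ∀ x y, rel x y = rel y x
  rel_diag : ∀ x y, rel x y = 0 ↔ x = y
  rel_surj : ∀ i : Fin (D + 1), ∃ x y, rel x y = i
  p : Fin (D + 1) → Fin (D + 1) → Fin (D + 1) → ℕ
  card_rel : ∀ (i j k : Fin (D + 1)) (x y : X), rel x y = k →
    (Finset.univ.filter fun z => rel x z = i ∧ rel z y = j).card = p i j k

/-- The 0-1 adjacency matrix of relation `i`. -/
def AssocScheme.A {D : ℕ} {X : Type} [Fintype X] (S : AssocScheme D X)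
    (i : Fin (D + 1)) : Matrix X X ℝ :=
  Matrix.of fun x y => if S.rel x y = i then (1 : ℝ) else 0

/-- The triple intersection number `[i j k]` with respect to vertices `x, y, z`. -/
def AssocScheme.triple {D : ℕ} {X : Type} [Fintype X] (S : AssocScheme D X)
    (x y z : X) (i j k : Fin (D + 1)) : ℕ :=
  (Finset.univ.filter fun w => S.rel x w = i ∧ S.rel y w = j ∧ S.rel z w = k).card

/-- The quadruple intersection number `[h i j k]` with respect to `w, x, y, z`. -/
def AssocScheme.quad {D : ℕ} {X : Type} [Fintype X] (S : AssocScheme D X)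
    (w x y z : X) (h i j k : Fin (D + 1)) : ℕ :=
  (Finset.univ.filter fun u =>
    S.rel u w = h ∧ S.rel u x = i ∧ S.rel u y = j ∧ S.rel u z = k).card


/-- Corollary 4.2: if the triple intersection number `[i j k]_{x,y,z}` vanishes
for all triples of vertices with `(x,y) ∈ R_r`, `(x,z) ∈ R_s`, `(y,z) ∈ R_t`,
then `[k s t]_{w,x,y}` vanishes for all `w, x, y` with `(w,x) ∈ R_i`,
`(w,y) ∈ R_j`, `(x,y) ∈ R_r`. -/
theorem triple_zero_transfer {D : ℕ} {X : Type} [Fintype X]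
    (S : AssocScheme D X) (r s t i j k : Fin (D + 1))
    (h : ∀ x y z : X, S.rel x y = r → S.rel x z = s → S.rel y z = t →
      S.triple x y z i j k = 0) :
    ∀ w x y : X, S.rel w x = i → S.rel w y = j → S.rel x y = r →
      S.triple w x y k s t = 0 := by
  intro w x y hwx hwy hxy
  unfold AssocScheme.triple
  rw [Finset.card_eq_zero, Finset.filter_eq_empty_iff]
  rintro z _ ⟨h1, h2, h3⟩
  have hz := h x y z hxy h2 h3
  unfold AssocScheme.triple at hz
  rw [Finset.card_eq_zero, Finset.filter_eq_empty_iff] at hz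
  exact hz (Finset.mem_univ w)
    ⟨(S.rel_symm x w).trans hwx, (S.rel_symm y w).trans hwy, (S.rel_symm z w).trans h1⟩
end

section
/- Let E_p, E_r, E_s, E_t be real symmetric idempotent n×n matrices (i.e., each satisfies E² = E and Eᵀ = E). Then the sum of all entries of the entrywise (Hadamard) product E_p ∘ E_r ∘ E_s ∘ E_t is nonnegative; indeed it equals Σ_{w,x,y,z} σ(w,x,y,z)², where σ(w,x,y,z) = Σ_{u} E_p(u,w) E_r(u,x) E_s(u,y) E_t(u,z). -/
open Matrix BigOperators

lemma sum_comm_six {X : Type} [Fintype X] (f : X → X → X → X → X → X → ℝ) :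
    (∑ w : X, ∑ x : X, ∑ y : X, ∑ z : X, ∑ u : X, ∑ v : X, f w x y z u v)
      = ∑ u : X, ∑ v : X, ∑ w : X, ∑ x : X, ∑ y : X, ∑ z : X, f w x y z u v := by
  calc (∑ w : X, ∑ x : X, ∑ y : X, ∑ z : X, ∑ u : X, ∑ v : X, f w x y z u v)
      = ∑ p : X × X × X × X, ∑ q : X × X, f p.1 p.2.1 p.2.2.1 p.2.2.2 q.1 q.2 := by
        simp [Fintype.sum_prod_type]
    _ = ∑ q : X × X, ∑ p : X × X × X × X, f p.1 p.2.1 p.2.2.1 p.2.2.2 q.1 q.2 :=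
        Finset.sum_comm
    _ = _ := by simp [Fintype.sum_prod_type]

lemma key_idem {X : Type} [Fintype X] (E : Matrix X X ℝ) (hE : E * E = E)
    (hEt : Eᵀ = E) (u v : X) : ∑ w : X, E u w * E v w = E u v := by
  have h1 : ∑ w : X, E u w * E v w = (E * E) u v := by
    rw [Matrix.mul_apply]
    refine Finset.sum_congr rfl fun w _ => ?_
    congr 1
    conv_lhs => rw [← hEt]
    rfl
  rw [h1, hE]

/-- For real symmetric idempotent matrices `E_p, E_r, E_s, E_t`, the sum of all
entries of the Hadamard product `E_p ∘ E_r ∘ E_s ∘ E_t` is nonnegative; indeed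
it equals `Σ_{w,x,y,z} σ(w,x,y,z)²` where
`σ(w,x,y,z) = Σ_u E_p(u,w) E_r(u,x) E_s(u,y) E_t(u,z)`. -/
theorem entrySum_hadamard_idempotents_nonneg {X : Type} [Fintype X]
    (Ep Er Es Et : Matrix X X ℝ)
    (hEp : Ep * Ep = Ep) (hEpt : Epᵀ = Ep)
    (hEr : Er * Er = Er) (hErt : Erᵀ = Er)
    (hEs : Es * Es = Es) (hEst : Esᵀ = Es)
    (hEt : Et * Et = Et) (hEtt : Etᵀ = Et) :
    0 ≤ ∑ x : X, ∑ y : X,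
        Matrix.hadamard (Matrix.hadamard (Matrix.hadamard Ep Er) Es) Et x y ∧
    ∑ x : X, ∑ y : X,
        Matrix.hadamard (Matrix.hadamard (Matrix.hadamard Ep Er) Es) Et x y
      = ∑ w : X, ∑ x : X, ∑ y : X, ∑ z : X,
          (∑ u : X, Ep u w * Er u x * Es u y * Et u z) ^ 2 := by
  have heq : (∑ w : X, ∑ x : X, ∑ y : X, ∑ z : X,
          (∑ u : X, Ep u w * Er u x * Es u y * Et u z) ^ 2)
      = ∑ x : X, ∑ y : X,
        Matrix.hadamard (Matrix.hadamard (Matrix.hadamard Ep Er) Es) Et x y := by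
    calc (∑ w : X, ∑ x : X, ∑ y : X, ∑ z : X,
          (∑ u : X, Ep u w * Er u x * Es u y * Et u z) ^ 2)
        = ∑ w : X, ∑ x : X, ∑ y : X, ∑ z : X, ∑ u : X, ∑ v : X,
            (Ep u w * Ep v w) * ((Er u x * Er v x) * ((Es u y * Es v y) * (Et u z * Et v z))) := by
          refine Finset.sum_congr rfl fun w _ => Finset.sum_congr rfl fun x _ =>
            Finset.sum_congr rfl fun y _ => Finset.sum_congr rfl fun z _ => ?_
          rw [sq, Finset.sum_mul_sum]
          exact Finset.sum_congr rfl fun u _ => Finset.sum_congr rfl fun v _ => by ring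
      _ = ∑ u : X, ∑ v : X, ∑ w : X, ∑ x : X, ∑ y : X, ∑ z : X,
            (Ep u w * Ep v w) * ((Er u x * Er v x) * ((Es u y * Es v y) * (Et u z * Et v z))) :=
          sum_comm_six _
      _ = ∑ u : X, ∑ v : X,
            (∑ w : X, Ep u w * Ep v w) * ((∑ x : X, Er u x * Er v x) *
              ((∑ y : X, Es u y * Es v y) * (∑ z : X, Et u z * Et v z))) := by
          refine Finset.sum_congr rfl fun u _ => Finset.sum_congr rfl fun v _ => ?_
          simp only [← Finset.mul_sum, ← Finset.sum_mul]
      _ = ∑ u : X, ∑ v : X, Ep u v * (Er u v * (Es u v * Et u v)) := by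
          refine Finset.sum_congr rfl fun u _ => Finset.sum_congr rfl fun v _ => ?_
          rw [key_idem Ep hEp hEpt, key_idem Er hEr hErt, key_idem Es hEs hEst,
            key_idem Et hEt hEtt]
      _ = _ := by
          refine Finset.sum_congr rfl fun u _ => Finset.sum_congr rfl fun v _ => ?_
          simp only [Matrix.hadamard_apply]; ring
  refine ⟨heq ▸ ?_, heq.symm⟩
  refine Finset.sum_nonneg fun w _ => Finset.sum_nonneg fun x _ =>
    Finset.sum_nonneg fun y _ => Finset.sum_nonneg fun z _ => sq_nonneg _
end
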